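/- (Theorem 3(b).) Under the hypotheses of Theorem 1 (closed-loop unicycle dynamics with controller ω = v/d + v·k₁·Ω(v·ē_x) + v·k₂·((r − d)/r)·η(r − d), v ≠ 0 constant, k₁, k₂ > 0, r(0) ∈ (r_i, r_o)), set Υ₁ = √(1 − exp(−2·V₁(0)/(d·k₂))) where V₁(0) = (1/2)(ē_x(0)² + ē_y(0)²) + d·k₂·V_r(r(0) − d). Then for all t ≥ 0: −δ_a·Υ₁ ≤ r(t) − d ≤ δ_b·Υ₁, and r_i + δ_a·(1 − Υ₁) ≤ r(t) ≤ r_o − δ_b·(1 − Υ₁). -/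

import Mathlib

/-- Range r(t) = √((x(t) − x_T)² + (y(t) − y_T)²). -/
noncomputable def rng (x y : ℝ → ℝ) (xT yT : ℝ) (t : ℝ) : ℝ :=
  Real.sqrt ((x t - xT) ^ 2 + (y t - yT) ^ 2)

/-- Transformed error ē_x(t) = (x(t) − x_T)·cos θ(t) + (y(t) − y_T)·sin θ(t). -/
noncomputable def ebx (x y θ : ℝ → ℝ) (xT yT : ℝ) (t : ℝ) : ℝ :=
  (x t - xT) * Real.cos (θ t) + (y t - yT) * Real.sin (θ t)

/-- Transformed error ē_y(t) = −(x(t) − x_T)·sin θ(t) + (y(t) − y_T)·cos θ(t) + d. -/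
noncomputable def eby (x y θ : ℝ → ℝ) (xT yT d : ℝ) (t : ℝ) : ℝ :=
  -(x t - xT) * Real.sin (θ t) + (y t - yT) * Real.cos (θ t) + d

/-- The asymmetric barrier Lyapunov function V_r. -/
noncomputable def Vr (δa δb e : ℝ) : ℝ :=
  if 0 < e then (1 / 2) * Real.log (δb ^ 2 / (δb ^ 2 - e ^ 2))
  else (1 / 2) * Real.log (δa ^ 2 / (δa ^ 2 - e ^ 2))

/-- η(e) = 1/(δ_b² − e²) for e > 0 and η(e) = 1/(δ_a² − e²) for e ≤ 0. -/
noncomputable def eta (δa δb e : ℝ) : ℝ :=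
  if 0 < e then 1 / (δb ^ 2 - e ^ 2) else 1 / (δa ^ 2 - e ^ 2)

lemma Vr_nonneg {δa δb e : ℝ} (ha : 0 < δa) (hb : 0 < δb)
    (h1 : -δa < e) (h2 : e < δb) : 0 ≤ Vr δa δb e := by
  unfold Vr
  split_ifs with h
  · have h3 : (0:ℝ) < δb ^ 2 - e ^ 2 := by nlinarith
    have : (1:ℝ) ≤ δb ^ 2 / (δb ^ 2 - e ^ 2) := by
      rw [le_div_iff₀ h3]; nlinarith
    have := Real.log_nonneg this
    linarith
  · have h3 : (0:ℝ) < δa ^ 2 - e ^ 2 := by nlinarith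
    have : (1:ℝ) ≤ δa ^ 2 / (δa ^ 2 - e ^ 2) := by
      rw [le_div_iff₀ h3]; nlinarith
    have := Real.log_nonneg this
    linarith

lemma hasDerivAt_Vr {δa δb e : ℝ} (ha : 0 < δa) (hb : 0 < δb)
    (h1 : -δa < e) (h2 : e < δb) :
    HasDerivAt (Vr δa δb) (e * eta δa δb e) e := by
  rcases lt_trichotomy e 0 with he | he | he
  · -- negative branch
    have hopen : Set.Ioo (-δa) 0 ∈ nhds e := (isOpen_Ioo).mem_nhds ⟨h1, he⟩
    have heq : Vr δa δb =ᶠ[nhds e]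
        fun e' => (1/2) * (Real.log (δa ^ 2) - Real.log (δa ^ 2 - e' ^ 2)) := by
      filter_upwards [hopen] with e' he'
      have h3 : (0:ℝ) < δa ^ 2 - e' ^ 2 := by
        rcases he' with ⟨u1, u2⟩; nlinarith
      simp only [Vr, if_neg (not_lt.2 he'.2.le)]
      rw [Real.log_div (by positivity) (ne_of_gt h3)]
    have hd : HasDerivAt (fun e' : ℝ => (1/2) * (Real.log (δa ^ 2) - Real.log (δa ^ 2 - e' ^ 2)))
        (e * (1 / (δa ^ 2 - e ^ 2))) e := by
      have h3 : (0:ℝ) < δa ^ 2 - e ^ 2 := by nlinarith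
      have hinner : HasDerivAt (fun e' : ℝ => δa ^ 2 - e' ^ 2) (-(2*e)) e := by
        simpa using ((hasDerivAt_pow 2 e).const_sub (δa ^ 2))
      have := (hinner.log (ne_of_gt h3)).const_sub (Real.log (δa ^ 2))
      have := this.const_mul (1/2 : ℝ)
      refine this.congr_deriv ?_
      field_simp
    have : eta δa δb e = 1 / (δa ^ 2 - e ^ 2) := by simp [eta, not_lt.2 he.le]
    rw [this]
    exact hd.congr_of_eventuallyEq heq
  · -- e = 0
    subst he
    have hVr0 : Vr δa δb 0 = 0 := by
      have h5 : δa^2/δa^2 = (1:ℝ) := div_self (by positivity)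
      simp [Vr, h5]
    rw [hasDerivAt_iff_tendsto_slope]
    have hm : (0:ℝ) < min δa δb := lt_min ha hb
    have key : ∀ h : ℝ, h ≠ 0 → |h| < min δa δb / 2 →
        |slope (Vr δa δb) 0 h| ≤ (2 / (min δa δb)^2) * |h| := by
      intro h hh hhs
      have hb2 : h^2 < (min δa δb)^2 / 4 := by
        have := abs_nonneg h
        nlinarith [sq_abs h]
      have hVh_nonneg : 0 ≤ Vr δa δb h := by
        apply Vr_nonneg ha hb
        · have : min δa δb ≤ δa := min_le_left _ _
          have := neg_abs_le h
          nlinarith [abs_nonneg h]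
        · have : min δa δb ≤ δb := min_le_right _ _
          have := le_abs_self h
          nlinarith [abs_nonneg h]
      have hVh_le : Vr δa δb h ≤ (2 / (min δa δb)^2) * h^2 := by
        have hma : (min δa δb)^2 ≤ δa^2 := by
          have : min δa δb ≤ δa := min_le_left _ _
          nlinarith [hm]
        have hmb : (min δa δb)^2 ≤ δb^2 := by
          have : min δa δb ≤ δb := min_le_right _ _
          nlinarith [hm]
        unfold Vr
        split_ifs with hpos
        · have h3 : (0:ℝ) < δb ^ 2 - h ^ 2 := by nlinarith
          have hlog : Real.log (δb ^ 2 / (δb ^ 2 - h ^ 2)) ≤ δb ^ 2 / (δb ^ 2 - h ^ 2) - 1 :=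
            Real.log_le_sub_one_of_pos (by positivity)
          have : δb ^ 2 / (δb ^ 2 - h ^ 2) - 1 = h^2 / (δb ^ 2 - h ^ 2) := by
            field_simp
            ring
          rw [this] at hlog
          have hden : (min δa δb)^2 / 2 ≤ δb ^ 2 - h ^ 2 := by nlinarith
          have : h^2 / (δb ^ 2 - h ^ 2) ≤ h^2 / ((min δa δb)^2 / 2) := by
            apply div_le_div_of_nonneg_left (by positivity) (by positivity) hden
          have h4 : h^2 / ((min δa δb)^2 / 2) = (2 / (min δa δb)^2) * h^2 := by
            field_simp
          have h5 : (0:ℝ) ≤ (2 / (min δa δb)^2) * h^2 := by positivity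
          linarith
        · have h3 : (0:ℝ) < δa ^ 2 - h ^ 2 := by nlinarith
          have hlog : Real.log (δa ^ 2 / (δa ^ 2 - h ^ 2)) ≤ δa ^ 2 / (δa ^ 2 - h ^ 2) - 1 :=
            Real.log_le_sub_one_of_pos (by positivity)
          have : δa ^ 2 / (δa ^ 2 - h ^ 2) - 1 = h^2 / (δa ^ 2 - h ^ 2) := by
            field_simp
            ring
          rw [this] at hlog
          have hden : (min δa δb)^2 / 2 ≤ δa ^ 2 - h ^ 2 := by nlinarith
          have : h^2 / (δa ^ 2 - h ^ 2) ≤ h^2 / ((min δa δb)^2 / 2) := by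
            apply div_le_div_of_nonneg_left (by positivity) (by positivity) hden
          have h4 : h^2 / ((min δa δb)^2 / 2) = (2 / (min δa δb)^2) * h^2 := by
            field_simp
          have h5 : (0:ℝ) ≤ (2 / (min δa δb)^2) * h^2 := by positivity
          linarith
      have hslope : slope (Vr δa δb) 0 h = Vr δa δb h / h := by
        simp [slope, hVr0]
        ring
      rw [hslope, abs_div]
      rw [abs_of_nonneg hVh_nonneg]
      rw [div_le_iff₀ (abs_pos.2 hh)]
      calc Vr δa δb h ≤ (2 / (min δa δb)^2) * h^2 := hVh_le
        _ = (2 / (min δa δb)^2) * |h| * |h| := by rw [← sq_abs h]; ring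
    have : (0:ℝ) * eta δa δb 0 = 0 := by ring
    rw [this]
    have hub : ∀ᶠ h in nhdsWithin (0:ℝ) {(0:ℝ)}ᶜ,
        ‖slope (Vr δa δb) 0 h‖ ≤ (2 / (min δa δb)^2) * |h| := by
      have hsmall : ∀ᶠ h in nhds (0:ℝ), |h| < min δa δb / 2 := by
        have hmem : Set.Ioo (-(min δa δb / 2)) (min δa δb / 2) ∈ nhds (0:ℝ) :=
          isOpen_Ioo.mem_nhds ⟨by linarith, by linarith⟩
        filter_upwards [hmem] with h hh
        exact abs_lt.2 ⟨hh.1, hh.2⟩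
      filter_upwards [eventually_nhdsWithin_of_eventually_nhds hsmall,
        self_mem_nhdsWithin] with h h1' h2'
      rw [Real.norm_eq_abs]
      exact key h h2' h1'
    have hgt : Filter.Tendsto (fun h : ℝ => (2 / (min δa δb)^2) * |h|)
        (nhdsWithin (0:ℝ) {(0:ℝ)}ᶜ) (nhds 0) := by
      have := ((continuous_abs.tendsto (0:ℝ)).const_mul ((2:ℝ) / (min δa δb)^2)).mono_left
        (nhdsWithin_le_nhds (s := {(0:ℝ)}ᶜ))
      simpa using this
    exact squeeze_zero_norm' hub hgt
  · -- positive branch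
    have hopen : Set.Ioo 0 δb ∈ nhds e := (isOpen_Ioo).mem_nhds ⟨he, h2⟩
    have heq : Vr δa δb =ᶠ[nhds e]
        fun e' => (1/2) * (Real.log (δb ^ 2) - Real.log (δb ^ 2 - e' ^ 2)) := by
      filter_upwards [hopen] with e' he'
      have h3 : (0:ℝ) < δb ^ 2 - e' ^ 2 := by
        rcases he' with ⟨u1, u2⟩; nlinarith
      simp only [Vr, if_pos he'.1]
      rw [Real.log_div (by positivity) (ne_of_gt h3)]
    have hd : HasDerivAt (fun e' : ℝ => (1/2) * (Real.log (δb ^ 2) - Real.log (δb ^ 2 - e' ^ 2)))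
        (e * (1 / (δb ^ 2 - e ^ 2))) e := by
      have h3 : (0:ℝ) < δb ^ 2 - e ^ 2 := by nlinarith
      have hinner : HasDerivAt (fun e' : ℝ => δb ^ 2 - e' ^ 2) (-(2*e)) e := by
        simpa using ((hasDerivAt_pow 2 e).const_sub (δb ^ 2))
      have := (hinner.log (ne_of_gt h3)).const_sub (Real.log (δb ^ 2))
      have := this.const_mul (1/2 : ℝ)
      refine this.congr_deriv ?_
      field_simp
    have : eta δa δb e = 1 / (δb ^ 2 - e ^ 2) := by simp [eta, he]
    rw [this]
    exact hd.congr_of_eventuallyEq heq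

set_option maxHeartbeats 1000000 in
/-- Theorem 3(b): Under the hypotheses of Theorem 1, with
Υ₁ = √(1 − exp(−2·V₁(0)/(d·k₂))), the radial error and range satisfy
−δ_a·Υ₁ ≤ r(t) − d ≤ δ_b·Υ₁ and r_i + δ_a·(1 − Υ₁) ≤ r(t) ≤ r_o − δ_b·(1 − Υ₁)
for all t ≥ 0. -/
theorem theorem3b_range_bounds
    (x y θ : ℝ → ℝ) (Ω : ℝ → ℝ) (v d k1 k2 ri ro xT yT : ℝ)
    (hΩcont : Continuous Ω) (hΩ0 : Ω 0 = 0) (hΩpos : ∀ s : ℝ, s ≠ 0 → 0 < s * Ω s)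
    (hv : v ≠ 0) (hri : 0 < ri) (hrid : ri < d) (hdro : d < ro)
    (hk1 : 0 < k1) (hk2 : 0 < k2)
    (hxdiff : ∀ t ≥ (0 : ℝ), DifferentiableAt ℝ x t)
    (hydiff : ∀ t ≥ (0 : ℝ), DifferentiableAt ℝ y t)
    (hθdiff : ∀ t ≥ (0 : ℝ), DifferentiableAt ℝ θ t)
    (hclosedloop : ∀ t ≥ (0 : ℝ), rng x y xT yT t ∈ Set.Ioo ri ro →
      HasDerivAt x (v * Real.cos (θ t)) t ∧
      HasDerivAt y (v * Real.sin (θ t)) t ∧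
      HasDerivAt θ (v / d + v * k1 * Ω (v * ebx x y θ xT yT t) +
        v * k2 * ((rng x y xT yT t - d) / rng x y xT yT t) *
          eta (d - ri) (ro - d) (rng x y xT yT t - d)) t)
    (hr0 : rng x y xT yT 0 ∈ Set.Ioo ri ro)
    (V10 Υ₁ : ℝ)
    (hV10 : V10 = (1 / 2) * ((ebx x y θ xT yT 0) ^ 2 + (eby x y θ xT yT d 0) ^ 2) +
      d * k2 * Vr (d - ri) (ro - d) (rng x y xT yT 0 - d))
    (hΥ₁ : Υ₁ = Real.sqrt (1 - Real.exp (-(2 * V10) / (d * k2)))) :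
    ∀ t ≥ (0 : ℝ),
      (-(d - ri) * Υ₁ ≤ rng x y xT yT t - d ∧ rng x y xT yT t - d ≤ (ro - d) * Υ₁) ∧
      (ri + (d - ri) * (1 - Υ₁) ≤ rng x y xT yT t ∧
        rng x y xT yT t ≤ ro - (ro - d) * (1 - Υ₁)) := by
  have hd0 : (0:ℝ) < d := hri.trans hrid
  have hδa : (0:ℝ) < d - ri := by linarith
  have hδb : (0:ℝ) < ro - d := by linarith
  have hdk2 : (0:ℝ) < d * k2 := by positivity
  set V : ℝ → ℝ := fun t =>
    (1 / 2) * ((ebx x y θ xT yT t) ^ 2 + (eby x y θ xT yT d t) ^ 2) +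
      d * k2 * Vr (d - ri) (ro - d) (rng x y xT yT t - d) with hVdef
  have hV0 : V 0 = V10 := by rw [hV10]
  -- positivity of rng in the band
  have hrpos : ∀ t : ℝ, rng x y xT yT t ∈ Set.Ioo ri ro → 0 < rng x y xT yT t :=
    fun t ht => hri.trans ht.1
  -- continuity of rng at t ≥ 0
  have hrcont : ∀ t : ℝ, 0 ≤ t → ContinuousAt (rng x y xT yT) t := by
    intro t ht
    exact Real.continuous_sqrt.continuousAt.comp
      ((((hxdiff t ht).continuousAt.sub continuousAt_const).pow 2).add
        (((hydiff t ht).continuousAt.sub continuousAt_const).pow 2))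
  -- derivative of V
  have hVderiv : ∀ t : ℝ, 0 ≤ t → rng x y xT yT t ∈ Set.Ioo ri ro →
      HasDerivAt V (-(d * k1) * ((v * ebx x y θ xT yT t) * Ω (v * ebx x y θ xT yT t))) t := by
    intro t ht hband
    obtain ⟨hx, hy, hθd⟩ := hclosedloop t ht hband
    set r := rng x y xT yT t with hrdef
    set ex := ebx x y θ xT yT t with hexdef
    set ey := eby x y θ xT yT d t with heydef
    set ω := v / d + v * k1 * Ω (v * ex) + v * k2 * ((r - d) / r) * eta (d - ri) (ro - d) (r - d)
      with hωdef
    have hrpos' : 0 < r := hrpos t hband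
    have hrne : r ≠ 0 := ne_of_gt hrpos'
    have hq : HasDerivAt (fun s => (x s - xT) ^ 2 + (y s - yT) ^ 2)
        (2 * (x t - xT) * (v * Real.cos (θ t)) + 2 * (y t - yT) * (v * Real.sin (θ t))) t := by
      have h1 := ((hx.sub_const xT).pow 2).add ((hy.sub_const yT).pow 2)
      refine h1.congr_deriv ?_
      ring
    have hqval : (x t - xT) ^ 2 + (y t - yT) ^ 2 = r ^ 2 := by
      rw [hrdef]
      rw [rng, Real.sq_sqrt (by positivity)]
    have hqne : (x t - xT) ^ 2 + (y t - yT) ^ 2 ≠ 0 := by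
      rw [hqval]; positivity
    have hr : HasDerivAt (rng x y xT yT) (v * ex / r) t := by
      have h1 := (Real.hasDerivAt_sqrt hqne).comp t hq
      have h2 : Real.sqrt ((x t - xT) ^ 2 + (y t - yT) ^ 2) = r := rfl
      refine h1.congr_deriv ?_
      rw [h2, hexdef, ebx]
      field_simp
    have hcos : HasDerivAt (fun s => Real.cos (θ s)) (-Real.sin (θ t) * ω) t :=
      (Real.hasDerivAt_cos (θ t)).comp t hθd
    have hsin : HasDerivAt (fun s => Real.sin (θ s)) (Real.cos (θ t) * ω) t :=
      (Real.hasDerivAt_sin (θ t)).comp t hθd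
    have hex' : HasDerivAt (ebx x y θ xT yT) (v + ω * (ey - d)) t := by
      have h1 := ((hx.sub_const xT).mul hcos).add ((hy.sub_const yT).mul hsin)
      refine h1.congr_deriv ?_
      rw [heydef, eby]
      have hpy := Real.sin_sq_add_cos_sq (θ t)
      linear_combination v * hpy
    have hey' : HasDerivAt (eby x y θ xT yT d) (-(ω * ex)) t := by
      have h1 := ((((hx.sub_const xT).neg.mul hsin).add
        ((hy.sub_const yT).mul hcos)).add_const d)
      refine h1.congr_deriv ?_
      rw [hexdef, ebx]
      simp only [Pi.neg_apply]
      ring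
    have he1 : -(d - ri) < r - d := by have := hband.1; linarith
    have he2 : r - d < ro - d := by have := hband.2; linarith
    have hVr' : HasDerivAt (fun s => Vr (d - ri) (ro - d) (rng x y xT yT s - d))
        ((r - d) * eta (d - ri) (ro - d) (r - d) * (v * ex / r)) t :=
      by have := (hasDerivAt_Vr hδa hδb he1 he2).comp t (hr.sub_const d); exact this
    have hV : HasDerivAt V
        ((1/2) * (2 * ex ^ 1 * (v + ω * (ey - d)) + 2 * ey ^ 1 * (-(ω * ex))) +
          d * k2 * ((r - d) * eta (d - ri) (ro - d) (r - d) * (v * ex / r))) t := by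
      exact (((hex'.pow 2).add (hey'.pow 2)).const_mul (1/2)).add (hVr'.const_mul (d * k2))
    convert hV using 1
    rw [hωdef]
    field_simp
    ring
  -- basic facts about Υ₁
  set c : ℝ := Real.exp (-(2 * V10) / (d * k2)) with hcdef
  have hcpos : 0 < c := by rw [hcdef]; exact Real.exp_pos _
  clear_value c
  have hV10nn : 0 ≤ V10 := by
    have hVrnn : 0 ≤ Vr (d - ri) (ro - d) (rng x y xT yT 0 - d) :=
      Vr_nonneg hδa hδb (by have := hr0.1; linarith) (by have := hr0.2; linarith)
    have h1 : 0 ≤ d * k2 * Vr (d - ri) (ro - d) (rng x y xT yT 0 - d) :=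
      mul_nonneg hdk2.le hVrnn
    rw [hV10]
    nlinarith [sq_nonneg (ebx x y θ xT yT 0), sq_nonneg (eby x y θ xT yT d 0)]
  have hcle1 : c ≤ 1 := by
    rw [hcdef]
    apply Real.exp_le_one_iff.2
    apply div_nonpos_of_nonpos_of_nonneg (by linarith) hdk2.le
  have hΥsq : Υ₁ ^ 2 = 1 - c := by
    rw [hΥ₁, Real.sq_sqrt (by linarith)]
  have hΥnn : 0 ≤ Υ₁ := by rw [hΥ₁]; exact Real.sqrt_nonneg _
  have hΥlt1 : Υ₁ < 1 := by nlinarith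
  -- inverse of c
  have hcinv : c * Real.exp (2 * V10 / (d * k2)) = 1 := by
    rw [hcdef, ← Real.exp_add]
    rw [show -(2 * V10) / (d * k2) + 2 * V10 / (d * k2) = 0 by ring, Real.exp_zero]
  -- barrier lemma
  have hbar : ∀ t : ℝ, rng x y xT yT t ∈ Set.Ioo ri ro → V t ≤ V10 →
      -(d - ri) * Υ₁ ≤ rng x y xT yT t - d ∧ rng x y xT yT t - d ≤ (ro - d) * Υ₁ := by
    intro t hband hVle
    set e := rng x y xT yT t - d with hedef
    clear_value e
    have he1 : -(d - ri) < e := by rw [hedef]; have := hband.1; linarith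
    have he2 : e < ro - d := by rw [hedef]; have := hband.2; linarith
    have hVrle : Vr (d - ri) (ro - d) e ≤ V10 / (d * k2) := by
      have hq : 0 ≤ (1 / 2) * ((ebx x y θ xT yT t) ^ 2 + (eby x y θ xT yT d t) ^ 2) := by
        positivity
      have hVt : V t = (1 / 2) * ((ebx x y θ xT yT t) ^ 2 + (eby x y θ xT yT d t) ^ 2) +
          d * k2 * Vr (d - ri) (ro - d) e := by
        simp only [hVdef]
        rw [hedef]
      rw [hVt] at hVle
      rw [le_div_iff₀ hdk2]
      linarith
    by_cases hpos : 0 < e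
    · have hVre : Vr (d - ri) (ro - d) e =
          (1 / 2) * Real.log ((ro - d) ^ 2 / ((ro - d) ^ 2 - e ^ 2)) := by
        rw [Vr, if_pos hpos]
      have hden : 0 < (ro - d) ^ 2 - e ^ 2 := by nlinarith
      have hlog : Real.log ((ro - d) ^ 2 / ((ro - d) ^ 2 - e ^ 2)) ≤ 2 * V10 / (d * k2) := by
        rw [hVre] at hVrle
        calc Real.log ((ro - d) ^ 2 / ((ro - d) ^ 2 - e ^ 2))
            = 2 * ((1 / 2) * Real.log ((ro - d) ^ 2 / ((ro - d) ^ 2 - e ^ 2))) := by ring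
          _ ≤ 2 * (V10 / (d * k2)) := by linarith
          _ = 2 * V10 / (d * k2) := by ring
      have hexp : (ro - d) ^ 2 / ((ro - d) ^ 2 - e ^ 2) ≤ Real.exp (2 * V10 / (d * k2)) := by
        rw [← Real.exp_log (div_pos (pow_pos hδb 2) hden)]
        exact Real.exp_le_exp.2 hlog
      have hmul : (ro - d) ^ 2 ≤ Real.exp (2 * V10 / (d * k2)) * ((ro - d) ^ 2 - e ^ 2) := by
        rw [div_le_iff₀ hden] at hexp
        linarith
      have hsq : e ^ 2 ≤ (ro - d) ^ 2 * (1 - c) := by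
        nlinarith [mul_le_mul_of_nonneg_left hmul hcpos.le, hcinv]
      have hsq2 : e ^ 2 ≤ ((ro - d) * Υ₁) ^ 2 := by
        rw [mul_pow, hΥsq]; nlinarith
      constructor
      · have : 0 ≤ (d - ri) * Υ₁ := mul_nonneg hδa.le hΥnn
        linarith
      · nlinarith [mul_nonneg hδb.le hΥnn]
    · push_neg at hpos
      have hVre : Vr (d - ri) (ro - d) e =
          (1 / 2) * Real.log ((d - ri) ^ 2 / ((d - ri) ^ 2 - e ^ 2)) := by
        rw [Vr, if_neg (not_lt.2 hpos)]
      have hden : 0 < (d - ri) ^ 2 - e ^ 2 := by nlinarith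
      have hlog : Real.log ((d - ri) ^ 2 / ((d - ri) ^ 2 - e ^ 2)) ≤ 2 * V10 / (d * k2) := by
        rw [hVre] at hVrle
        calc Real.log ((d - ri) ^ 2 / ((d - ri) ^ 2 - e ^ 2))
            = 2 * ((1 / 2) * Real.log ((d - ri) ^ 2 / ((d - ri) ^ 2 - e ^ 2))) := by ring
          _ ≤ 2 * (V10 / (d * k2)) := by linarith
          _ = 2 * V10 / (d * k2) := by ring
      have hexp : (d - ri) ^ 2 / ((d - ri) ^ 2 - e ^ 2) ≤ Real.exp (2 * V10 / (d * k2)) := by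
        rw [← Real.exp_log (div_pos (pow_pos hδa 2) hden)]
        exact Real.exp_le_exp.2 hlog
      have hmul : (d - ri) ^ 2 ≤ Real.exp (2 * V10 / (d * k2)) * ((d - ri) ^ 2 - e ^ 2) := by
        rw [div_le_iff₀ hden] at hexp
        linarith
      have hsq : e ^ 2 ≤ (d - ri) ^ 2 * (1 - c) := by
        nlinarith [mul_le_mul_of_nonneg_left hmul hcpos.le, hcinv]
      have hsq2 : e ^ 2 ≤ ((d - ri) * Υ₁) ^ 2 := by
        rw [mul_pow, hΥsq]; nlinarith
      constructor
      · nlinarith [mul_nonneg hδa.le hΥnn]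
      · have : 0 ≤ (ro - d) * Υ₁ := mul_nonneg hδb.le hΥnn
        linarith
  -- Pred implies band membership
  have hPIoo : ∀ t : ℝ,
      (-(d - ri) * Υ₁ ≤ rng x y xT yT t - d ∧ rng x y xT yT t - d ≤ (ro - d) * Υ₁) →
      rng x y xT yT t ∈ Set.Ioo ri ro := by
    intro t hP
    constructor
    · nlinarith [hP.1]
    · nlinarith [hP.2]
  have hP0 : -(d - ri) * Υ₁ ≤ rng x y xT yT 0 - d ∧
      rng x y xT yT 0 - d ≤ (ro - d) * Υ₁ := hbar 0 hr0 hV0.le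
  -- the key invariance claim
  have hkey : ∀ T : ℝ, 0 ≤ T → ∀ s ∈ Set.Icc (0:ℝ) T,
      -(d - ri) * Υ₁ ≤ rng x y xT yT s - d ∧ rng x y xT yT s - d ≤ (ro - d) * Υ₁ := by
    intro T hT
    by_contra hcon
    push_neg at hcon
    obtain ⟨s0, hs0, hs0P⟩ := hcon
    set B : Set ℝ := {t : ℝ | t ∈ Set.Icc (0:ℝ) T ∧
      ¬ (-(d - ri) * Υ₁ ≤ rng x y xT yT t - d ∧ rng x y xT yT t - d ≤ (ro - d) * Υ₁)} with hBdef
    have hs0P' : ¬ (-(d - ri) * Υ₁ ≤ rng x y xT yT s0 - d ∧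
        rng x y xT yT s0 - d ≤ (ro - d) * Υ₁) := fun h => absurd (hs0P h.1) (not_lt.2 h.2)
    have hBne : B.Nonempty := ⟨s0, hs0, hs0P'⟩
    have hBbd : BddBelow B := ⟨0, fun b hb => hb.1.1⟩
    set τ := sInf B with hτdef
    have hτ0 : 0 ≤ τ := le_csInf hBne (fun b hb => hb.1.1)
    have hτT : τ ≤ T := (csInf_le hBbd ⟨hs0, hs0P'⟩).trans hs0.2
    have hbelow : ∀ s : ℝ, 0 ≤ s → s < τ →
        -(d - ri) * Υ₁ ≤ rng x y xT yT s - d ∧ rng x y xT yT s - d ≤ (ro - d) * Υ₁ := by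
      intro s hs hsτ
      by_contra h
      exact absurd hsτ (not_lt.2 (csInf_le hBbd ⟨⟨hs, hsτ.le.trans hτT⟩, h⟩))
    have hPτ : -(d - ri) * Υ₁ ≤ rng x y xT yT τ - d ∧
        rng x y xT yT τ - d ≤ (ro - d) * Υ₁ := by
      rcases eq_or_lt_of_le hτ0 with h0 | h0
      · rw [← h0]; exact hP0
      · have htd : Filter.Tendsto (rng x y xT yT) (nhdsWithin τ (Set.Iio τ))
            (nhds (rng x y xT yT τ)) :=
          ((hrcont τ hτ0).tendsto).mono_left nhdsWithin_le_nhds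
        have hmem : Set.Ioo (0:ℝ) τ ∈ nhdsWithin τ (Set.Iio τ) :=
          Ioo_mem_nhdsLT_of_mem ⟨h0, le_refl τ⟩
        constructor
        · have h1 : ∀ᶠ s in nhdsWithin τ (Set.Iio τ),
              d + (-(d - ri) * Υ₁) ≤ rng x y xT yT s := by
            filter_upwards [hmem] with s hs
            have := (hbelow s hs.1.le hs.2).1
            linarith
          have := ge_of_tendsto htd h1
          linarith
        · have h1 : ∀ᶠ s in nhdsWithin τ (Set.Iio τ),
              rng x y xT yT s ≤ d + (ro - d) * Υ₁ := by
            filter_upwards [hmem] with s hs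
            have := (hbelow s hs.1.le hs.2).2
            linarith
          have := le_of_tendsto htd h1
          linarith
    have hIooτ : ∀ s ∈ Set.Icc (0:ℝ) τ, rng x y xT yT s ∈ Set.Ioo ri ro := by
      intro s hs
      rcases lt_or_eq_of_le hs.2 with h | h
      · exact hPIoo s (hbelow s hs.1 h)
      · rw [h]; exact hPIoo τ hPτ
    rcases eq_or_lt_of_le hτT with hE | hE
    · -- τ = T : then B = {τ}, contradiction with hPτ
      obtain ⟨b, hb⟩ := hBne
      have hbτ : b = τ := le_antisymm (hb.1.2.trans hE.symm.le) (csInf_le hBbd hb)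
      exact hb.2 (hbτ ▸ hPτ)
    · -- τ < T : extend
      have hrIooτ : rng x y xT yT τ ∈ Set.Ioo ri ro := hPIoo τ hPτ
      have hevn : ∀ᶠ s in nhds τ, rng x y xT yT s ∈ Set.Ioo ri ro :=
        (hrcont τ hτ0).eventually_mem (isOpen_Ioo.mem_nhds hrIooτ)
      obtain ⟨ε, hε, hball⟩ := Metric.eventually_nhds_iff.1 hevn
      set m := min (τ + ε / 2) T with hmdef
      have hm0 : 0 ≤ m := le_min (by linarith) hT
      have hmT : m ≤ T := min_le_right _ _
      have hτm : τ < m := lt_min (by linarith) hE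
      have hIoom : ∀ s ∈ Set.Icc (0:ℝ) m, rng x y xT yT s ∈ Set.Ioo ri ro := by
        intro s hs
        by_cases hsτ : s ≤ τ
        · exact hIooτ s ⟨hs.1, hsτ⟩
        · push_neg at hsτ
          apply hball
          rw [Real.dist_eq, abs_of_pos (by linarith)]
          have : s ≤ τ + ε / 2 := hs.2.trans (min_le_left _ _)
          linarith
      have hVanti : AntitoneOn V (Set.Icc 0 m) := by
        apply antitoneOn_of_deriv_nonpos (convex_Icc 0 m)
        · intro s hs
          exact (hVderiv s hs.1 (hIoom s hs)).continuousAt.continuousWithinAt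
        · intro s hs
          rw [interior_Icc] at hs
          exact (hVderiv s hs.1.le (hIoom s ⟨hs.1.le, hs.2.le⟩)).differentiableAt.differentiableWithinAt
        · intro s hs
          rw [interior_Icc] at hs
          rw [(hVderiv s hs.1.le (hIoom s ⟨hs.1.le, hs.2.le⟩)).deriv]
          rcases eq_or_ne (v * ebx x y θ xT yT s) 0 with h | h
          · rw [h, hΩ0]; simp
          · have h2 := hΩpos _ h
            rw [neg_mul]
            exact neg_nonpos_of_nonneg (mul_nonneg (by positivity) h2.le)
      have hPm : ∀ s ∈ Set.Icc (0:ℝ) m,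
          -(d - ri) * Υ₁ ≤ rng x y xT yT s - d ∧ rng x y xT yT s - d ≤ (ro - d) * Υ₁ := by
        intro s hs
        apply hbar s (hIoom s hs)
        calc V s ≤ V 0 := hVanti ⟨le_refl 0, hm0⟩ hs hs.1
          _ = V10 := hV0
      have hlb : m ≤ τ := by
        apply le_csInf hBne
        intro b hb
        by_contra hbm
        push_neg at hbm
        exact hb.2 (hPm b ⟨hb.1.1, hbm.le⟩)
      linarith
  intro t ht
  have hP := hkey t ht t ⟨ht, le_refl t⟩
  refine ⟨⟨hP.1, hP.2⟩, ?_, ?_⟩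
  · rw [show ri + (d - ri) * (1 - Υ₁) = d + (-(d - ri) * Υ₁) by ring]
    linarith [hP.1]
  · rw [show ro - (ro - d) * (1 - Υ₁) = d + (ro - d) * Υ₁ by ring]
    linarith [hP.2]
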